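/- arXiv:2109.04225 — 2 statements merged into one kernel-verified Lean document; each statement's English description precedes it below -/
import Mathlib

section
/- Let p ∈ (2,3) and let S ∈ Ω_p be a price path with associated partitions (P^n). Let 𝒵 be a Borel measurable subset of C²_b(ℝ^d;ℝ^d) and let ν be a probability measure on 𝒵 such that ∫_𝒵 ‖f‖_{C²_b} dν(f) < ∞. For f ∈ 𝒵 let φ^f_t := f(S_t) be the portfolio generated by f. Then Cover's universal portfolio φ^ν_t := ∫_𝒵 φ^f_t dν(f), t ∈ [0,∞), is well-defined as a Bochner integral in the Banach space of controlled paths (φ,φ') ∈ 𝒱^{p,p/2}_S with jump times contained in ∪_n P^n (equipped with the norm (φ,φ') ↦ |φ_0| + ‖φ,φ'‖_{𝒱^{p,p/2}_S}), and φ^ν is an admissible strategy with respect to S. -/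
open Set Filter MeasureTheory
open scoped Topology InnerProductSpace BigOperators

noncomputable section

/-- `ℝ^d` with the Euclidean norm. -/
abbrev Vec (d : ℕ) := EuclideanSpace ℝ (Fin d)

/-- `ℝ^{d×d}` with the Euclidean (Frobenius) norm. -/
abbrev Mat (d : ℕ) := EuclideanSpace ℝ (Fin d × Fin d)

def mkVec {d : ℕ} (f : Fin d → ℝ) : Vec d := (WithLp.equiv 2 (Fin d → ℝ)).symm f

def mkMat {d : ℕ} (f : Fin d × Fin d → ℝ) : Mat d := (WithLp.equiv 2 (Fin d × Fin d → ℝ)).symm f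

/-- The tensor product `a ⊗ b` of two vectors, as a `d × d` matrix. -/
def tensor {d : ℕ} (a b : Vec d) : Mat d := mkMat (fun ij => a ij.1 * b ij.2)

/-- A matrix (an element of `L(ℝ^d, ℝ^d)`) applied to a vector. -/
def matApply {d : ℕ} (M : Mat d) (v : Vec d) : Vec d := mkVec (fun i => ∑ j, M (i, j) * v j)

/-- The matrix with `(i,j)` entry `Σ_k A_{ki} B_{kj}`, i.e. `AᵀB`. -/
def matTProd {d : ℕ} (A B : Mat d) : Mat d := mkMat (fun ij => ∑ k, A (k, ij.1) * B (k, ij.2))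

/-- The identity matrix. -/
def idMat {d : ℕ} : Mat d := mkMat (fun ij => if ij.1 = ij.2 then (1 : ℝ) else 0)

/-- The contraction `F' G' 𝕏 := Σ_{k,i,j} F'_{ki} G'_{kj} 𝕏_{ij}`. -/
def ddContract {d : ℕ} (A B X : Mat d) : ℝ := ∑ k, ∑ i, ∑ j, A (k, i) * B (k, j) * X (i, j)

/-- The increment process `(s,t) ↦ X_t - X_s` of a path. -/
def inc {E : Type*} [AddCommGroup E] (X : ℝ → E) : ℝ → ℝ → E := fun s t => X t - X s

/-- A (finite) partition `s = τ_0 < τ_1 < ⋯ < τ_N = t` of the interval `[s,t]`. -/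
structure IntervalPartition (s t : ℝ) where
  N : ℕ
  τ : ℕ → ℝ
  Npos : 0 < N
  first : τ 0 = s
  last : τ N = t
  mono : ∀ k < N, τ k < τ (k + 1)

/-- The mesh of the partition is `< δ`. -/
def IntervalPartition.MeshLt {s t : ℝ} (P : IntervalPartition s t) (δ : ℝ) : Prop :=
  ∀ k < P.N, P.τ (k + 1) - P.τ k < δ

/-- The sum `Σ_{[u,v] ∈ P} |A_{u,v}|^p` along a partition `P`, for a two-parameter
function `A`. -/
def varSumOn {E : Type*} [NormedAddCommGroup E] (p : ℝ) (A : ℝ → ℝ → E)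
    {s t : ℝ} (P : IntervalPartition s t) : ℝ :=
  ∑ k ∈ Finset.range P.N, ‖A (P.τ k) (P.τ (k + 1))‖ ^ p

/-- The set of all sums `Σ_{[u,v] ∈ P} |A_{u,v}|^p` over partitions `P` of `[s,t]`. -/
def pVarSums {E : Type*} [NormedAddCommGroup E] (p : ℝ) (A : ℝ → ℝ → E) (s t : ℝ) : Set ℝ :=
  {x | ∃ P : IntervalPartition s t, x = varSumOn p A P}

/-- The `p`-variation `‖A‖_{p,[s,t]} := (sup_P Σ_{[u,v] ∈ P} |A_{u,v}|^p)^{1/p}` of a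
two-parameter function `A` (for a path `X`, apply this to `inc X`). -/
def pVar {E : Type*} [NormedAddCommGroup E] (p : ℝ) (A : ℝ → ℝ → E) (s t : ℝ) : ℝ :=
  sSup (pVarSums p A s t) ^ (1 / p)

/-- `A` has finite `p`-variation on `[s,t]`. -/
def HasBddPVar {E : Type*} [NormedAddCommGroup E] (p : ℝ) (A : ℝ → ℝ → E) (s t : ℝ) : Prop :=
  BddAbove (pVarSums p A s t)

/-- `f` is càdlàg on `[a,b]`: right-continuous on `[a,b)` with left limits on `(a,b]`. -/
def CadlagOn {E : Type*} [TopologicalSpace E] (f : ℝ → E) (a b : ℝ) : Prop :=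
  (∀ t ∈ Ico a b, Tendsto f (𝓝[>] t) (𝓝 (f t))) ∧
  (∀ t ∈ Ioc a b, ∃ l, Tendsto f (𝓝[<] t) (𝓝 l))

/-- The supremum norm of `f` on `[a,b]`. -/
def supNormOn {E : Type*} [NormedAddCommGroup E] (f : ℝ → E) (a b : ℝ) : ℝ :=
  sSup ((fun u => ‖f u‖) '' Icc a b)

/-- A control function on `Δ_{[0,T]}`: nonnegative and superadditive. -/
def IsControl (T : ℝ) (w : ℝ → ℝ → ℝ) : Prop :=
  (∀ ⦃s t : ℝ⦄, 0 ≤ s → s ≤ t → t ≤ T → 0 ≤ w s t) ∧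
  (∀ ⦃s u t : ℝ⦄, 0 ≤ s → s ≤ u → u ≤ t → t ≤ T → w s u + w u t ≤ w s t)

/-- The set of jump times of `f` in `(0,T]`. -/
def jumpSet {E : Type*} [TopologicalSpace E] (f : ℝ → E) (T : ℝ) : Set ℝ :=
  {u | u ∈ Ioc (0 : ℝ) T ∧ Function.leftLim f u ≠ f u}

/-- A càdlàg `p`-rough path `(X, Z, 𝕏)` over `ℝ^d` on `[0,T]`:
`X, Z ∈ D^p([0,T];ℝ^d)`, `𝕏 ∈ D^{p/2}_2(Δ_{[0,T]};ℝ^{d×d})`, and Chen's relation holds. -/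
structure IsRoughPath (d : ℕ) (p T : ℝ) (X Z : ℝ → Vec d) (XX : ℝ → ℝ → Mat d) : Prop where
  cadlagX : CadlagOn X 0 T
  cadlagZ : CadlagOn Z 0 T
  varX : HasBddPVar p (inc X) 0 T
  varZ : HasBddPVar p (inc Z) 0 T
  cadlagXX₁ : ∀ t ∈ Icc (0 : ℝ) T, CadlagOn (fun s => XX s t) 0 t
  cadlagXX₂ : ∀ s ∈ Icc (0 : ℝ) T, CadlagOn (fun t => XX s t) s T
  varXX : HasBddPVar (p / 2) XX 0 T
  chen : ∀ ⦃s u t : ℝ⦄, 0 ≤ s → s ≤ u → u ≤ t → t ≤ T →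
    XX s t = XX s u + XX u t + tensor (Z u - Z s) (X t - X u)

/-- The remainder `R^F_{s,t} := F_{s,t} - F'_s Z_{s,t}` of a controlled path. -/
def rem {d : ℕ} (Z F : ℝ → Vec d) (F' : ℝ → Mat d) : ℝ → ℝ → Vec d :=
  fun s t => F t - F s - matApply (F' s) (Z t - Z s)

/-- `(F, F')` is a controlled path in `𝒱^{q,r}_Z` on `[0,T]` (with `F ∈ D^p`):
`F ∈ D^p([0,T];ℝ^d)`, `F' ∈ D^q([0,T];L(ℝ^d,ℝ^d))` and `R^F ∈ D^r_2(Δ_{[0,T]};ℝ^d)`. -/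
structure IsControlledPath (d : ℕ) (p q r T : ℝ) (Z : ℝ → Vec d)
    (F : ℝ → Vec d) (F' : ℝ → Mat d) : Prop where
  cadlagF : CadlagOn F 0 T
  varF : HasBddPVar p (inc F) 0 T
  cadlagF' : CadlagOn F' 0 T
  varF' : HasBddPVar q (inc F') 0 T
  cadlagR₁ : ∀ t ∈ Icc (0 : ℝ) T, CadlagOn (fun s => rem Z F F' s t) 0 t
  cadlagR₂ : ∀ s ∈ Icc (0 : ℝ) T, CadlagOn (fun t => rem Z F F' s t) s T
  varR : HasBddPVar r (rem Z F F') 0 T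

/-- The controlled path norm `‖F,F'‖_{𝒱^{q,r}_Z,[0,T]} := |F'_0| + ‖F'‖_q + ‖R^F‖_r`. -/
def ctrlNorm {d : ℕ} (q r T : ℝ) (Z F : ℝ → Vec d) (F' : ℝ → Mat d) : ℝ :=
  ‖F' 0‖ + pVar q (inc F') 0 T + pVar r (rem Z F F') 0 T

/-- Compensated Riemann sum `Σ (⟨F_u, G_{u,v}⟩ + F'_u G'_u 𝕏_{u,v})` along a partition of `[0,t]`. -/
def compSum {d : ℕ} (F : ℝ → Vec d) (F' : ℝ → Mat d) (G : ℝ → Vec d) (G' : ℝ → Mat d)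
    (XX : ℝ → ℝ → Mat d) {t : ℝ} (P : IntervalPartition 0 t) : ℝ :=
  ∑ k ∈ Finset.range P.N,
    (⟪F (P.τ k), G (P.τ (k + 1)) - G (P.τ k)⟫_ℝ
      + ddContract (F' (P.τ k)) (G' (P.τ k)) (XX (P.τ k) (P.τ (k + 1))))

/-- `I` is the value at time `t` of the rough integral `∫₀ᵗ F dG`: the compensated Riemann
sums converge to `I` along every sequence of partitions of `[0,t]` with mesh tending to `0`. -/
def IsRoughIntegralAt {d : ℕ} (F : ℝ → Vec d) (F' : ℝ → Mat d) (G : ℝ → Vec d)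
    (G' : ℝ → Mat d) (XX : ℝ → ℝ → Mat d) (t : ℝ) (I : ℝ) : Prop :=
  ∀ ε > 0, ∃ δ > 0, ∀ P : IntervalPartition 0 t, P.MeshLt δ →
    |compSum F F' G G' XX P - I| < ε

/-- The rough path seminorm `‖X‖_{p,[0,T]} + ‖Z‖_{p,[0,T]} + ‖𝕏‖_{p/2,[0,T]}`. -/
def roughNorm {d : ℕ} (p T : ℝ) (X Z : ℝ → Vec d) (XX : ℝ → ℝ → Mat d) : ℝ :=
  pVar p (inc X) 0 T + pVar p (inc Z) 0 T + pVar (p / 2) XX 0 T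

/-- The rough path distance `‖X − X̃‖_p + ‖Z − Z̃‖_p + ‖𝕏 − 𝕏̃‖_{p/2}`. -/
def roughDist {d : ℕ} (p T : ℝ) (X Z X' Z' : ℝ → Vec d) (XX XX' : ℝ → ℝ → Mat d) : ℝ :=
  pVar p (inc (fun u => X u - X' u)) 0 T + pVar p (inc (fun u => Z u - Z' u)) 0 T
    + pVar (p / 2) (fun s t => XX s t - XX' s t) 0 T

/-- A nested sequence of partitions `P^n = {0 = t^n_0 < t^n_1 < ⋯ < t^n_{N_n} = T}` of `[0,T]`
with vanishing mesh size. -/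
structure PartitionSeq (T : ℝ) where
  N : ℕ → ℕ
  t : ℕ → ℕ → ℝ
  Npos : ∀ n, 0 < N n
  first : ∀ n, t n 0 = 0
  last : ∀ n, t n (N n) = T
  mono : ∀ n, ∀ k < N n, t n k < t n (k + 1)
  nested : ∀ n, ∀ k ≤ N n, ∃ l ≤ N (n + 1), t (n + 1) l = t n k
  mesh : ∀ ε > 0, ∃ M : ℕ, ∀ n ≥ M, ∀ k < N n, t n (k + 1) - t n k < ε

/-- The set `∪_{n ∈ ℕ} P^n` of all partition points. -/
def PartitionSeq.points {T : ℝ} (π : PartitionSeq T) : Set ℝ :=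
  {x | ∃ n, ∃ k ≤ π.N n, π.t n k = x}

/-- The left-point discretization
`S^n_u = S_T 1_{{T}}(u) + Σ_k S_{t^n_k} 1_{[t^n_k, t^n_{k+1})}(u)`. -/
def PartitionSeq.disc {T : ℝ} (π : PartitionSeq T) {E : Type*} [NormedAddCommGroup E]
    (S : ℝ → E) (n : ℕ) (u : ℝ) : E :=
  Set.indicator {T} S u
    + ∑ k ∈ Finset.range (π.N n),
        Set.indicator (Ico (π.t n k) (π.t n (k + 1))) (fun _ => S (π.t n k)) u

/-- The Riemann sum `∫₀ᵘ S^n ⊗ dS := Σ_k S_{t^n_k} ⊗ (S_{t^n_{k+1} ∧ u} - S_{t^n_k ∧ u})`. -/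
def riemannSum {d : ℕ} {T : ℝ} (π : PartitionSeq T) (S : ℝ → Vec d) (n : ℕ) (u : ℝ) : Mat d :=
  ∑ k ∈ Finset.range (π.N n),
    tensor (S (π.t n k)) (S (min (π.t n (k + 1)) u) - S (min (π.t n k) u))

/-- The Riemann sum `∫_{t^n_k}^{t^n_l} S^n ⊗ dS` between two partition points. -/
def riemannBetween {d : ℕ} {T : ℝ} (π : PartitionSeq T) (S : ℝ → Vec d) (n k l : ℕ) : Mat d :=
  ∑ j ∈ Finset.Ico k l, tensor (S (π.t n j)) (S (π.t n (j + 1)) - S (π.t n j))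

/-- Property (RIE) for `S` with respect to `p` and `(P^n)`, with Riemann-sum limit `II` and
control function `w`:  `S` is càdlàg, `S^n → S` uniformly, the Riemann sums `∫₀· S^n ⊗ dS`
converge uniformly to `II`, and `w` dominates `|S_{s,t}|^p` as well as
`|∫_{t^n_k}^{t^n_l} S^n ⊗ dS - S_{t^n_k} ⊗ S_{t^n_k,t^n_l}|^{p/2}`. -/
structure SatisfiesRIE (d : ℕ) (p T : ℝ) (π : PartitionSeq T) (S : ℝ → Vec d)
    (II : ℝ → Mat d) (w : ℝ → ℝ → ℝ) : Prop where
  cadlag : CadlagOn S 0 T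
  discUnif : TendstoUniformlyOn (fun n => π.disc S n) S atTop (Icc 0 T)
  riemannUnif : TendstoUniformlyOn (fun n => riemannSum π S n) II atTop (Icc 0 T)
  control : IsControl T w
  domS : ∀ ⦃s t : ℝ⦄, 0 ≤ s → s ≤ t → t ≤ T → ‖S t - S s‖ ^ p ≤ w s t
  domA : ∀ n : ℕ, ∀ ⦃k l : ℕ⦄, k < l → l ≤ π.N n →
    ‖riemannBetween π S n k l - tensor (S (π.t n k)) (S (π.t n l) - S (π.t n k))‖ ^ (p / 2)
      ≤ w (π.t n k) (π.t n l)

/-- The canonical second-level function `A_{s,t} := ∫ₛᵗ S ⊗ dS - S_s ⊗ S_{s,t}`,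
built from the limit `II = ∫₀· S ⊗ dS` of the Riemann sums in Property (RIE). -/
def roughA {d : ℕ} (S : ℝ → Vec d) (II : ℝ → Mat d) : ℝ → ℝ → Mat d :=
  fun s t => II t - II s - tensor (S s) (S t - S s)

/-- A nested sequence of locally finite partitions of `[0,∞)`, with vanishing mesh size
on compact intervals. -/
structure PartitionSeqInf where
  t : ℕ → ℕ → ℝ
  first : ∀ n, t n 0 = 0
  mono : ∀ n k, t n k < t n (k + 1)
  locFin : ∀ n, Tendsto (t n) atTop atTop
  nested : ∀ n k, ∃ l, t (n + 1) l = t n k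
  mesh : ∀ T > 0, ∀ ε > 0, ∃ M : ℕ, ∀ n ≥ M, ∀ k, t n k < T → t n (k + 1) - t n k < ε

/-- The set `∪_{n ∈ ℕ} P^n` of all partition points. -/
def PartitionSeqInf.points (π : PartitionSeqInf) : Set ℝ := {x | ∃ n k, π.t n k = x}

/-- The points of the restricted partition `P^n([0,T]) = (P^n ∪ {T}) ∩ [0,T]`. -/
def partPtsInf (τ : ℕ → ℝ) (T : ℝ) : Set ℝ := {x | (∃ k, τ k = x) ∧ x ≤ T} ∪ {T}

/-- Left-point discretization of `S` along the partition `τ` restricted to `[0,T]`. -/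
def discInf {E : Type*} [NormedAddCommGroup E] (τ : ℕ → ℝ) (S : ℝ → E) (T u : ℝ) : E :=
  Set.indicator {T} S u
    + ∑' k : ℕ, Set.indicator (Ico (τ k) (min (τ (k + 1)) T)) (fun _ => S (τ k)) u

/-- The Riemann sum `∫₀ᵘ S^n ⊗ dS := Σ_k S_{τ_k} ⊗ (S_{τ_{k+1} ∧ u} - S_{τ_k ∧ u})`. -/
def riemannInf {d : ℕ} (τ : ℕ → ℝ) (S : ℝ → Vec d) (u : ℝ) : Mat d :=
  ∑' k : ℕ, tensor (S (τ k)) (S (min (τ (k + 1)) u) - S (min (τ k) u))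

/-- Property (RIE) on `[0,T]` for the restriction of `S` to `[0,T]`, along the restricted
partitions `P^n([0,T])`, with Riemann-sum limit `II` and control function `w`. -/
structure SatisfiesRIEInf (d : ℕ) (p T : ℝ) (π : PartitionSeqInf) (S : ℝ → Vec d)
    (II : ℝ → Mat d) (w : ℝ → ℝ → ℝ) : Prop where
  cadlag : CadlagOn S 0 T
  discUnif : TendstoUniformlyOn (fun n => discInf (π.t n) S T) S atTop (Icc 0 T)
  riemannUnif : TendstoUniformlyOn (fun n => riemannInf (π.t n) S) II atTop (Icc 0 T)
  control : IsControl T w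
  domS : ∀ ⦃s t : ℝ⦄, 0 ≤ s → s ≤ t → t ≤ T → ‖S t - S s‖ ^ p ≤ w s t
  domA : ∀ n : ℕ, ∀ ⦃a b : ℝ⦄, a ∈ partPtsInf (π.t n) T → b ∈ partPtsInf (π.t n) T → a ≤ b →
    ‖riemannInf (π.t n) S b - riemannInf (π.t n) S a - tensor (S a) (S b - S a)‖ ^ (p / 2)
      ≤ w a b

/-- `S : [0,∞) → ℝ^d` is a price path (`S ∈ Ω_p`) with partition sequence `π` and
Riemann-sum limit `II = ∫₀· S ⊗ dS`: for every `T > 0` the restriction `S|_{[0,T]}`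
satisfies Property (RIE) with respect to `p` and `(P^n([0,T]))`. -/
def IsPricePath {d : ℕ} (p : ℝ) (π : PartitionSeqInf) (S : ℝ → Vec d)
    (II : ℝ → Mat d) : Prop :=
  ∀ T > 0, ∃ w : ℝ → ℝ → ℝ, SatisfiesRIEInf d p T π S II w

/-- All jump times of `φ` in `(0,∞)` belong to the set `P`. -/
def JumpsIn {E : Type*} [TopologicalSpace E] (φ : ℝ → E) (P : Set ℝ) : Prop :=
  ∀ t > (0 : ℝ), Function.leftLim φ t ≠ φ t → t ∈ P

/-- `φ` is an admissible strategy with respect to the price path `S` (with partition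
sequence `π`), with exponents `q, r` and Gubinelli derivative `φ'`. -/
structure AdmissibleWith {d : ℕ} (p : ℝ) (π : PartitionSeqInf) (S φ : ℝ → Vec d)
    (q r : ℝ) (φ' : ℝ → Mat d) : Prop where
  hpq : p ≤ q
  hr : 1 < r
  hq : 2 / p + 1 / q > 1
  hrpq : 1 / r = 1 / p + 1 / q
  ctrl : ∀ T > 0, IsControlledPath d p q r T S φ φ'
  jumps : JumpsIn φ π.points

/-- `φ` is an admissible strategy with respect to `S` (`φ ∈ 𝒜_S`). -/
def IsAdmissible {d : ℕ} (p : ℝ) (π : PartitionSeqInf) (S φ : ℝ → Vec d) : Prop :=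
  ∃ (q r : ℝ) (φ' : ℝ → Mat d), AdmissibleWith p π S φ q r φ'

/-- The left-point Riemann sum `Σ_k ⟨φ_{τ_k}, S_{τ_{k+1} ∧ t} - S_{τ_k ∧ t}⟩` of the
capital process. -/
def capSum {d : ℕ} (τ : ℕ → ℝ) (φ S : ℝ → Vec d) (t : ℝ) : ℝ :=
  ∑' k : ℕ, ⟪φ (τ k), S (min (τ (k + 1)) t) - S (min (τ k) t)⟫_ℝ

/-- `f ∈ C²_b`: twice continuously (Fréchet) differentiable with bounded `f`, `Df`, `D²f`. -/
def IsC2b {E F : Type*} [NormedAddCommGroup E] [NormedSpace ℝ E]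
    [NormedAddCommGroup F] [NormedSpace ℝ F] (f : E → F) : Prop :=
  ContDiff ℝ 2 f ∧ (∃ M, ∀ x, ‖f x‖ ≤ M) ∧ (∃ M, ∀ x, ‖fderiv ℝ f x‖ ≤ M) ∧
    (∃ M, ∀ x, ‖fderiv ℝ (fderiv ℝ f) x‖ ≤ M)

/-- The norm `‖f‖_{C²_b} := ‖f‖_∞ + ‖Df‖_∞ + ‖D²f‖_∞`. -/
def c2bNorm {E F : Type*} [NormedAddCommGroup E] [NormedSpace ℝ E]
    [NormedAddCommGroup F] [NormedSpace ℝ F] (f : E → F) : ℝ :=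
  sSup (Set.range fun x => ‖f x‖) + sSup (Set.range fun x => ‖fderiv ℝ f x‖)
    + sSup (Set.range fun x => ‖fderiv ℝ (fderiv ℝ f) x‖)

/-- The matrix of a continuous linear map `ℝ^d → ℝ^d`. -/
def clmToMat {d : ℕ} (L : Vec d →L[ℝ] Vec d) : Mat d :=
  mkMat (fun ij => L (EuclideanSpace.single ij.2 1) ij.1)


/-! ### Auxiliary lemmas -/

section Aux

lemma vec_sum_apply {d m : ℕ} (g : Fin m → Vec d) (i : Fin d) : (∑ x, g x) i = ∑ x, g x i :=
  by rw [WithLp.ofLp_sum]; exact Finset.sum_apply i Finset.univ _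

lemma matApply_clmToMat {d : ℕ} (L : Vec d →L[ℝ] Vec d) (v : Vec d) :
    matApply (clmToMat L) v = L v := by
  have hv : v = ∑ j, v j • EuclideanSpace.single j (1:ℝ) := by
    ext i
    rw [vec_sum_apply]
    simp [EuclideanSpace.single_apply]
  ext i
  conv_rhs => rw [hv, map_sum, vec_sum_apply]
  simp [matApply, clmToMat, mkVec, mkMat, mul_comm]

lemma norm_clmToMat_le {d : ℕ} (L : Vec d →L[ℝ] Vec d) : ‖clmToMat L‖ ≤ d * ‖L‖ := by
  have h : ‖clmToMat L‖ ≤ Real.sqrt (∑ _ij : Fin d × Fin d, ‖L‖^2) := by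
    rw [EuclideanSpace.norm_eq]
    apply Real.sqrt_le_sqrt
    apply Finset.sum_le_sum
    intro ij _
    have h2 : ‖clmToMat L ij‖ ≤ ‖L‖ := by
      have h1 : ‖L (EuclideanSpace.single ij.2 (1:ℝ))‖ ≤ ‖L‖ := by
        calc ‖L (EuclideanSpace.single ij.2 (1:ℝ))‖
            ≤ ‖L‖ * ‖EuclideanSpace.single ij.2 (1:ℝ)‖ := L.le_opNorm _
          _ = ‖L‖ := by rw [EuclideanSpace.norm_single, norm_one, mul_one]
      refine le_trans ?_ h1
      have h0 : ‖clmToMat L ij‖ = |L (EuclideanSpace.single ij.2 (1:ℝ)) ij.1| := by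
        simp [clmToMat, mkMat, Real.norm_eq_abs]
      rw [h0]
      rw [EuclideanSpace.norm_eq (L (EuclideanSpace.single ij.2 (1:ℝ)))]
      rw [show |L (EuclideanSpace.single ij.2 (1:ℝ)) ij.1|
        = Real.sqrt (‖L (EuclideanSpace.single ij.2 (1:ℝ)) ij.1‖^2) by
          rw [Real.sqrt_sq_eq_abs]; simp [Real.norm_eq_abs]]
      apply Real.sqrt_le_sqrt
      exact Finset.single_le_sum (f := fun j => ‖L (EuclideanSpace.single ij.2 (1:ℝ)) j‖^2)
        (fun j _ => by positivity) (Finset.mem_univ ij.1)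
    exact pow_le_pow_left₀ (norm_nonneg _) h2 2
  refine h.trans ?_
  rw [Finset.sum_const]
  simp only [Finset.card_univ, Fintype.card_prod, Fintype.card_fin, nsmul_eq_mul]
  rw [show ((d*d : ℕ) : ℝ) * ‖L‖^2 = (d*‖L‖)^2 by push_cast; ring]
  rw [Real.sqrt_sq (by positivity)]

lemma clmToMat_sub {d : ℕ} (L L' : Vec d →L[ℝ] Vec d) :
    clmToMat L - clmToMat L' = clmToMat (L - L') := by
  ext ij
  simp [clmToMat, mkMat]

lemma continuous_matApply {d : ℕ} : Continuous (fun q : Mat d × Vec d => matApply q.1 q.2) := by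
  unfold matApply mkVec
  have hc : Continuous ((WithLp.equiv 2 (Fin d → ℝ)).symm : (Fin d → ℝ) → Vec d) :=
    (PiLp.continuousLinearEquiv 2 ℝ (fun _ : Fin d => ℝ)).symm.continuous
  apply hc.comp
  apply continuous_pi
  intro i
  apply continuous_finset_sum
  intro j _
  have h1 : Continuous (fun q : Mat d × Vec d => q.1 (i,j)) :=
    ((continuous_apply (i,j)).comp
      (PiLp.continuousLinearEquiv 2 ℝ (fun _ : Fin d × Fin d => ℝ)).continuous).comp continuous_fst
  have h2 : Continuous (fun q : Mat d × Vec d => q.2 j) :=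
    ((continuous_apply j).comp
      (PiLp.continuousLinearEquiv 2 ℝ (fun _ : Fin d => ℝ)).continuous).comp continuous_snd
  exact h1.mul h2

/-- `M ↦ matApply M v` as a continuous linear map. -/
def matApplyCLM {d : ℕ} (v : Vec d) : Mat d →L[ℝ] Vec d :=
  LinearMap.toContinuousLinearMap
    { toFun := fun M => matApply M v
      map_add' := by
        intro M N; ext i
        simp [matApply, mkVec, add_mul, Finset.sum_add_distrib]
      map_smul' := by
        intro c M; ext i
        simp [matApply, mkVec, Finset.mul_sum, mul_assoc] }

lemma matApplyCLM_apply {d : ℕ} (v : Vec d) (M : Mat d) : matApplyCLM v M = matApply M v := rfl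

lemma CadlagOn.mono' {E : Type*} [TopologicalSpace E] {f : ℝ → E} {a b a' b' : ℝ}
    (h : CadlagOn f a b) (ha : a ≤ a') (hb : b' ≤ b) : CadlagOn f a' b' :=
  ⟨fun t ht => h.1 t ⟨ha.trans ht.1, ht.2.trans_le hb⟩,
   fun t ht => h.2 t ⟨lt_of_le_of_lt ha ht.1, ht.2.trans hb⟩⟩

lemma CadlagOn.compc {E F : Type*} [TopologicalSpace E] [TopologicalSpace F] {f : ℝ → E}
    {k : E → F} {a b : ℝ} (hk : Continuous k) (h : CadlagOn f a b) :
    CadlagOn (fun t => k (f t)) a b :=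
  ⟨fun t ht => (hk.tendsto _).comp (h.1 t ht),
   fun t ht => by obtain ⟨l, hl⟩ := h.2 t ht; exact ⟨k l, (hk.tendsto _).comp hl⟩⟩

lemma IntervalPartition.tau_mono {s t : ℝ} (P : IntervalPartition s t) :
    ∀ ⦃k m : ℕ⦄, k ≤ m → m ≤ P.N → P.τ k ≤ P.τ m := by
  intro k m hkm hm
  induction m with
  | zero => simp_all
  | succ n ih =>
    rcases Nat.eq_or_lt_of_le hkm with h | h
    · rw [h]
    · exact (ih (Nat.lt_succ_iff.mp h) (Nat.le_of_succ_le hm)).trans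
        (P.mono n (Nat.lt_of_succ_le hm)).le

lemma IntervalPartition.tau_mem {T : ℝ} (P : IntervalPartition 0 T) {k : ℕ} (hk : k ≤ P.N) :
    0 ≤ P.τ k ∧ P.τ k ≤ T := by
  have h1 := P.tau_mono (Nat.zero_le k) hk
  have h2 := P.tau_mono hk (le_refl P.N)
  rw [P.first] at h1
  rw [P.last] at h2
  exact ⟨h1, h2⟩

lemma sum_w_le {T : ℝ} {w : ℝ → ℝ → ℝ} (hw : IsControl T w) (P : IntervalPartition 0 T) :
    ∑ k ∈ Finset.range P.N, w (P.τ k) (P.τ (k + 1)) ≤ w 0 T := by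
  have key : ∀ m ≤ P.N, ∑ k ∈ Finset.range m, w (P.τ k) (P.τ (k + 1)) ≤ w (P.τ 0) (P.τ m) := by
    intro m hm
    induction m with
    | zero =>
      simp only [Finset.range_zero, Finset.sum_empty]
      exact hw.1 (P.tau_mem (Nat.zero_le _)).1 le_rfl (P.tau_mem (Nat.zero_le _)).2
    | succ n ih =>
      rw [Finset.sum_range_succ]
      calc _ ≤ w (P.τ 0) (P.τ n) + w (P.τ n) (P.τ (n+1)) :=
              add_le_add_left (ih (Nat.le_of_succ_le hm)) _
        _ ≤ w (P.τ 0) (P.τ (n+1)) := hw.2 (P.tau_mem (Nat.zero_le _)).1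
              (P.tau_mono (Nat.zero_le n) (Nat.le_of_succ_le hm))
              (P.mono n (Nat.lt_of_succ_le hm)).le (P.tau_mem hm).2
  have := key P.N le_rfl
  rwa [P.first, P.last] at this

lemma hasBddPVar_of_dom {E : Type*} [NormedAddCommGroup E] {e K T : ℝ} {A : ℝ → ℝ → E}
    {w : ℝ → ℝ → ℝ} (hw : IsControl T w) (hK : 0 ≤ K)
    (h : ∀ ⦃s t : ℝ⦄, 0 ≤ s → s ≤ t → t ≤ T → ‖A s t‖ ^ e ≤ K * w s t) :
    HasBddPVar e A 0 T := by
  refine ⟨K * w 0 T, ?_⟩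
  rintro x ⟨P, rfl⟩
  calc varSumOn e A P ≤ ∑ k ∈ Finset.range P.N, K * w (P.τ k) (P.τ (k + 1)) := by
        apply Finset.sum_le_sum
        intro k hk
        rw [Finset.mem_range] at hk
        exact h (P.tau_mem (Nat.le_of_lt hk)).1 (P.mono k hk).le (P.tau_mem hk).2
    _ = K * ∑ k ∈ Finset.range P.N, w (P.τ k) (P.τ (k + 1)) := by rw [Finset.mul_sum]
    _ ≤ K * w 0 T := mul_le_mul_of_nonneg_left (sum_w_le hw P) hK

lemma sSup_range_nonneg' {E : Type*} {g : E → ℝ} (hg : ∀ x, 0 ≤ g x) : 0 ≤ sSup (Set.range g) :=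
  Real.sSup_nonneg (by rintro x ⟨y, rfl⟩; exact hg y)

section C2b

variable {E F : Type*} [NormedAddCommGroup E] [NormedSpace ℝ E]
    [NormedAddCommGroup F] [NormedSpace ℝ F] {f : E → F}

lemma c2b_le1 (hf : IsC2b f) (x : E) : ‖f x‖ ≤ c2bNorm f := by
  obtain ⟨-, ⟨M, hM⟩, ⟨M', hM'⟩, ⟨M'', hM''⟩⟩ := hf
  have h1 : ‖f x‖ ≤ sSup (Set.range fun x => ‖f x‖) :=
    le_csSup ⟨M, by rintro y ⟨u, rfl⟩; exact hM u⟩ ⟨x, rfl⟩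
  have h2 : (0:ℝ) ≤ sSup (Set.range fun x => ‖fderiv ℝ f x‖) :=
    sSup_range_nonneg' fun y => norm_nonneg _
  have h3 : (0:ℝ) ≤ sSup (Set.range fun x => ‖fderiv ℝ (fderiv ℝ f) x‖) :=
    sSup_range_nonneg' fun y => ContinuousLinearMap.opNorm_nonneg _
  unfold c2bNorm; linarith

lemma c2b_le2 (hf : IsC2b f) (x : E) : ‖fderiv ℝ f x‖ ≤ c2bNorm f := by
  obtain ⟨-, ⟨M, hM⟩, ⟨M', hM'⟩, ⟨M'', hM''⟩⟩ := hf
  have h1 : ‖fderiv ℝ f x‖ ≤ sSup (Set.range fun x => ‖fderiv ℝ f x‖) :=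
    le_csSup ⟨M', by rintro y ⟨u, rfl⟩; exact hM' u⟩ ⟨x, rfl⟩
  have h2 : (0:ℝ) ≤ sSup (Set.range fun x => ‖f x‖) :=
    sSup_range_nonneg' fun y => norm_nonneg _
  have h3 : (0:ℝ) ≤ sSup (Set.range fun x => ‖fderiv ℝ (fderiv ℝ f) x‖) :=
    sSup_range_nonneg' fun y => ContinuousLinearMap.opNorm_nonneg _
  unfold c2bNorm; linarith

lemma c2b_le3 (hf : IsC2b f) (x : E) : ‖fderiv ℝ (fderiv ℝ f) x‖ ≤ c2bNorm f := by
  obtain ⟨-, ⟨M, hM⟩, ⟨M', hM'⟩, ⟨M'', hM''⟩⟩ := hf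
  have h1 : ‖fderiv ℝ (fderiv ℝ f) x‖ ≤ sSup (Set.range fun x => ‖fderiv ℝ (fderiv ℝ f) x‖) :=
    le_csSup ⟨M'', by rintro y ⟨u, rfl⟩; exact hM'' u⟩ ⟨x, rfl⟩
  have h2 : (0:ℝ) ≤ sSup (Set.range fun x => ‖f x‖) :=
    sSup_range_nonneg' fun y => norm_nonneg _
  have h3 : (0:ℝ) ≤ sSup (Set.range fun x => ‖fderiv ℝ f x‖) :=
    sSup_range_nonneg' fun y => norm_nonneg _
  unfold c2bNorm; linarith

lemma c2b_nonneg (hf : IsC2b f) : 0 ≤ c2bNorm f :=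
  (norm_nonneg _).trans (c2b_le1 hf 0)

lemma c2b_diff (hf : IsC2b f) : Differentiable ℝ f :=
  hf.1.differentiable (by norm_num)

lemma c2b_diff_fderiv (hf : IsC2b f) : Differentiable ℝ (fderiv ℝ f) :=
  (hf.1.fderiv_right (m := 1) (by norm_num)).differentiable (by norm_num)

lemma c2b_lip (hf : IsC2b f) (x y : E) : ‖f x - f y‖ ≤ c2bNorm f * ‖x - y‖ :=
  convex_univ.norm_image_sub_le_of_norm_fderiv_le (fun u _ => (c2b_diff hf) u)
    (fun u _ => c2b_le2 hf u) (mem_univ y) (mem_univ x)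

lemma c2b_lip' (hf : IsC2b f) (x y : E) :
    ‖fderiv ℝ f x - fderiv ℝ f y‖ ≤ c2bNorm f * ‖x - y‖ :=
  convex_univ.norm_image_sub_le_of_norm_fderiv_le (fun u _ => (c2b_diff_fderiv hf) u)
    (fun u _ => c2b_le3 hf u) (mem_univ y) (mem_univ x)

lemma c2b_taylor (hf : IsC2b f) (x y : E) :
    ‖f y - f x - fderiv ℝ f x (y - x)‖ ≤ (c2bNorm f * ‖y - x‖) * ‖y - x‖ := by
  refine (convex_segment x y).norm_image_sub_le_of_norm_fderiv_le'
    (fun u _ => (c2b_diff hf) u) ?_ (left_mem_segment ℝ x y) (right_mem_segment ℝ x y)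
  intro u hu
  have h1 : ‖fderiv ℝ f u - fderiv ℝ f x‖ ≤ c2bNorm f * ‖u - x‖ := c2b_lip' hf u x
  have h2 : ‖u - x‖ ≤ ‖y - x‖ := by
    have := dist_add_dist_of_mem_segment hu
    rw [dist_comm x u, dist_eq_norm, dist_eq_norm, dist_eq_norm] at this
    rw [norm_sub_rev y x]
    linarith [norm_nonneg (u - y)]
  exact h1.trans (mul_le_mul_of_nonneg_left h2 (c2b_nonneg hf))

end C2b

end Aux

/-- **Cover's universal portfolio is admissible** (Lemma 3.?).
Let `S ∈ Ω_p` be a price path, let `ν` be a probability measure on a (measurable) family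
`𝒵` of `C²_b` functions with `∫_𝒵 ‖f‖_{C²_b} dν(f) < ∞`.  Then the universal portfolio
`φ^ν_t := ∫_𝒵 f(S_t) dν(f)` is well defined as a Bochner integral (together with its
Gubinelli derivative `∫_𝒵 Df(S_t) dν(f)`), and `φ^ν` is an admissible strategy with
respect to `S`, with exponents `(q, r) = (p, p/2)`. -/
theorem covers_universal_portfolio_admissible
    (d : ℕ) (p : ℝ) (hp : 2 < p) (hp' : p < 3)
    (π : PartitionSeqInf) (S : ℝ → Vec d) (II : ℝ → Mat d)
    (hS : IsPricePath p π S II)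
    {Z : Type*} [MeasurableSpace Z] (ν : Measure Z) (hν : IsProbabilityMeasure ν)
    (f : Z → Vec d → Vec d)
    (hf : ∀ z, IsC2b (f z))
    (hmeas : ∀ x : Vec d, AEStronglyMeasurable (fun z => f z x) ν)
    (hmeas' : ∀ x : Vec d, AEStronglyMeasurable (fun z => clmToMat (fderiv ℝ (f z) x)) ν)
    (hint : Integrable (fun z => c2bNorm (f z)) ν) :
    (∀ t : ℝ, Integrable (fun z => f z (S t)) ν ∧
      Integrable (fun z => clmToMat (fderiv ℝ (f z) (S t))) ν) ∧
    AdmissibleWith p π S (fun t => ∫ z, f z (S t) ∂ν) p (p / 2)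
      (fun t => ∫ z, clmToMat (fderiv ℝ (f z) (S t)) ∂ν) := by
  have hp0 : (0:ℝ) < p := by linarith
  have hCz : ∀ z, 0 ≤ c2bNorm (f z) := fun z => c2b_nonneg (hf z)
  set C : ℝ := ∫ z, c2bNorm (f z) ∂ν with hCdef
  have hC0 : 0 ≤ C := integral_nonneg hCz
  -- integrability
  have hintf : ∀ x : Vec d, Integrable (fun z => f z x) ν := fun x =>
    hint.mono' (hmeas x) (Filter.Eventually.of_forall fun z => c2b_le1 (hf z) x)
  have hintD : ∀ x : Vec d, Integrable (fun z => clmToMat (fderiv ℝ (f z) x)) ν := fun x =>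
    (hint.const_mul d).mono' (hmeas' x) (Filter.Eventually.of_forall fun z =>
      (norm_clmToMat_le _).trans (mul_le_mul_of_nonneg_left (c2b_le2 (hf z) x)
        (Nat.cast_nonneg d)))
  -- Lipschitz estimates for the integrated maps
  have hglip : ∀ x y : Vec d, ‖(∫ z, f z x ∂ν) - ∫ z, f z y ∂ν‖ ≤ C * ‖x - y‖ := by
    intro x y
    rw [← integral_sub (hintf x) (hintf y)]
    calc ‖∫ z, (f z x - f z y) ∂ν‖ ≤ ∫ z, c2bNorm (f z) * ‖x - y‖ ∂ν :=
          norm_integral_le_of_norm_le (hint.mul_const _)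
            (Filter.Eventually.of_forall fun z => c2b_lip (hf z) x y)
      _ = C * ‖x - y‖ := by rw [integral_mul_const]
  have hg'lip : ∀ x y : Vec d,
      ‖(∫ z, clmToMat (fderiv ℝ (f z) x) ∂ν) - ∫ z, clmToMat (fderiv ℝ (f z) y) ∂ν‖
        ≤ (d * C) * ‖x - y‖ := by
    intro x y
    rw [← integral_sub (hintD x) (hintD y)]
    calc ‖∫ z, (clmToMat (fderiv ℝ (f z) x) - clmToMat (fderiv ℝ (f z) y)) ∂ν‖
        ≤ ∫ z, d * (c2bNorm (f z) * ‖x - y‖) ∂ν := by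
          refine norm_integral_le_of_norm_le ((hint.mul_const _).const_mul d)
            (Filter.Eventually.of_forall fun z => ?_)
          rw [clmToMat_sub]
          refine (norm_clmToMat_le _).trans ?_
          exact mul_le_mul_of_nonneg_left (c2b_lip' (hf z) x y) (Nat.cast_nonneg d)
      _ = (d * C) * ‖x - y‖ := by
          rw [integral_const_mul, integral_mul_const]; ring
  -- Taylor remainder estimate for the integrated maps
  have hgrem : ∀ x y : Vec d,
      ‖(∫ z, f z y ∂ν) - (∫ z, f z x ∂ν)
          - matApply (∫ z, clmToMat (fderiv ℝ (f z) x) ∂ν) (y - x)‖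
        ≤ C * (‖y - x‖ * ‖y - x‖) := by
    intro x y
    have hintc : Integrable (fun z => (fderiv ℝ (f z) x) (y - x)) ν := by
      have := (matApplyCLM (d := d) (y - x)).integrable_comp (hintD x)
      simpa only [matApplyCLM_apply, matApply_clmToMat] using this
    have h1 : matApply (∫ z, clmToMat (fderiv ℝ (f z) x) ∂ν) (y - x)
        = ∫ z, (fderiv ℝ (f z) x) (y - x) ∂ν := by
      have := (matApplyCLM (d := d) (y - x)).integral_comp_comm (hintD x)
      simpa only [matApplyCLM_apply, matApply_clmToMat] using this.symm
    have hsub : Integrable (fun z => f z y - f z x) ν := (hintf y).sub (hintf x)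
    rw [h1, ← integral_sub (hintf y) (hintf x), ← integral_sub hsub hintc]
    calc ‖∫ z, (f z y - f z x - (fderiv ℝ (f z) x) (y - x)) ∂ν‖
        ≤ ∫ z, c2bNorm (f z) * (‖y - x‖ * ‖y - x‖) ∂ν := by
          refine norm_integral_le_of_norm_le (hint.mul_const _)
            (Filter.Eventually.of_forall fun z => ?_)
          have := c2b_taylor (hf z) x y
          calc ‖f z y - f z x - (fderiv ℝ (f z) x) (y - x)‖
              ≤ (c2bNorm (f z) * ‖y - x‖) * ‖y - x‖ := this
            _ = c2bNorm (f z) * (‖y - x‖ * ‖y - x‖) := by ring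
      _ = C * (‖y - x‖ * ‖y - x‖) := by rw [integral_mul_const]
  -- continuity of the integrated maps
  have hgcont : Continuous (fun x : Vec d => ∫ z, f z x ∂ν) := by
    rw [Metric.continuous_iff]
    intro x ε hε
    refine ⟨ε / (C + 1), by positivity, fun y hy => ?_⟩
    rw [dist_eq_norm]
    calc ‖(∫ z, f z y ∂ν) - ∫ z, f z x ∂ν‖ ≤ C * ‖y - x‖ := hglip y x
      _ ≤ C * dist y x := by rw [dist_eq_norm]
      _ < ε := by
          rw [lt_div_iff₀ (by linarith : (0:ℝ) < C + 1)] at hy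
          nlinarith [dist_nonneg (x := y) (y := x)]
  have hg'cont : Continuous (fun x : Vec d => ∫ z, clmToMat (fderiv ℝ (f z) x) ∂ν) := by
    rw [Metric.continuous_iff]
    intro x ε hε
    refine ⟨ε / (d * C + 1), by positivity, fun y hy => ?_⟩
    rw [dist_eq_norm]
    calc ‖(∫ z, clmToMat (fderiv ℝ (f z) y) ∂ν) - ∫ z, clmToMat (fderiv ℝ (f z) x) ∂ν‖
        ≤ (d * C) * ‖y - x‖ := hg'lip y x
      _ ≤ (d * C) * dist y x := by rw [dist_eq_norm]
      _ < ε := by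
          have hdC : (0:ℝ) ≤ (d : ℝ) * C := by positivity
          rw [lt_div_iff₀ (by linarith : (0:ℝ) < (d:ℝ) * C + 1)] at hy
          nlinarith [dist_nonneg (x := y) (y := x)]
  refine ⟨fun t => ⟨hintf (S t), hintD (S t)⟩, ?_⟩
  refine ⟨le_rfl, by linarith, ?_, by have hpne : p ≠ 0 := ne_of_gt hp0; field_simp; ring, ?_, ?_⟩
  · -- 2/p + 1/p > 1
    rw [← add_div]
    rw [gt_iff_lt, lt_div_iff₀ hp0]
    linarith
  · -- controlled path on every [0,T]
    intro T hT
    obtain ⟨w, hRIE⟩ := hS T hT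
    have hrem_eq : ∀ s t : ℝ, rem S (fun t => ∫ z, f z (S t) ∂ν)
        (fun t => ∫ z, clmToMat (fderiv ℝ (f z) (S t)) ∂ν) s t
        = (∫ z, f z (S t) ∂ν) - (∫ z, f z (S s) ∂ν)
          - matApply (∫ z, clmToMat (fderiv ℝ (f z) (S s)) ∂ν) (S t - S s) := fun s t => rfl
    refine ⟨?_, ?_, ?_, ?_, ?_, ?_, ?_⟩
    · exact hRIE.cadlag.compc (k := fun x => ∫ z, f z x ∂ν) hgcont
    · refine hasBddPVar_of_dom (e := p) (K := C ^ p) hRIE.control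
        (Real.rpow_nonneg hC0 p) ?_
      intro s t hs hst htT
      calc ‖inc (fun t => ∫ z, f z (S t) ∂ν) s t‖ ^ p ≤ (C * ‖S t - S s‖) ^ p := by
            refine Real.rpow_le_rpow (norm_nonneg _) ?_ hp0.le
            exact hglip (S t) (S s)
        _ = C ^ p * ‖S t - S s‖ ^ p := Real.mul_rpow hC0 (norm_nonneg _)
        _ ≤ C ^ p * w s t := mul_le_mul_of_nonneg_left (hRIE.domS hs hst htT)
            (Real.rpow_nonneg hC0 p)
    · exact hRIE.cadlag.compc (k := fun x => ∫ z, clmToMat (fderiv ℝ (f z) x) ∂ν) hg'cont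
    · refine hasBddPVar_of_dom (e := p) (K := ((d : ℝ) * C) ^ p) hRIE.control
        (Real.rpow_nonneg (by positivity) p) ?_
      intro s t hs hst htT
      calc ‖inc (fun t => ∫ z, clmToMat (fderiv ℝ (f z) (S t)) ∂ν) s t‖ ^ p
          ≤ ((d * C) * ‖S t - S s‖) ^ p := by
            refine Real.rpow_le_rpow (norm_nonneg _) ?_ hp0.le
            exact hg'lip (S t) (S s)
        _ = ((d : ℝ) * C) ^ p * ‖S t - S s‖ ^ p := Real.mul_rpow (by positivity) (norm_nonneg _)
        _ ≤ ((d : ℝ) * C) ^ p * w s t := mul_le_mul_of_nonneg_left (hRIE.domS hs hst htT)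
            (Real.rpow_nonneg (by positivity) p)
    · -- cadlagR₁
      intro t ht
      have hk : Continuous (fun v : Vec d => (∫ z, f z (S t) ∂ν)
          - (∫ z, f z v ∂ν)
          - matApply (∫ z, clmToMat (fderiv ℝ (f z) v) ∂ν) (S t - v)) := by
        refine (continuous_const.sub hgcont).sub ?_
        exact continuous_matApply.comp (hg'cont.prodMk (continuous_const.sub continuous_id))
      exact (hRIE.cadlag.mono' le_rfl ht.2).compc (k := fun v : Vec d => (∫ z, f z (S t) ∂ν) - (∫ z, f z v ∂ν) - matApply (∫ z, clmToMat (fderiv ℝ (f z) v) ∂ν) (S t - v)) hk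
    · -- cadlagR₂
      intro s hs
      have hk : Continuous (fun v : Vec d => (∫ z, f z v ∂ν)
          - (∫ z, f z (S s) ∂ν)
          - matApply (∫ z, clmToMat (fderiv ℝ (f z) (S s)) ∂ν) (v - S s)) := by
        refine (hgcont.sub continuous_const).sub ?_
        exact continuous_matApply.comp
          (continuous_const.prodMk (continuous_id.sub continuous_const))
      exact (hRIE.cadlag.mono' hs.1 le_rfl).compc (k := fun v : Vec d => (∫ z, f z v ∂ν) - (∫ z, f z (S s) ∂ν) - matApply (∫ z, clmToMat (fderiv ℝ (f z) (S s)) ∂ν) (v - S s)) hk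
    · -- varR
      refine hasBddPVar_of_dom (e := p / 2) (K := C ^ (p / 2)) hRIE.control
        (Real.rpow_nonneg hC0 _) ?_
      intro s t hs hst htT
      have hb : ‖rem S (fun t => ∫ z, f z (S t) ∂ν)
          (fun t => ∫ z, clmToMat (fderiv ℝ (f z) (S t)) ∂ν) s t‖
          ≤ C * (‖S t - S s‖ * ‖S t - S s‖) := by
        rw [hrem_eq]
        exact hgrem (S s) (S t)
      calc ‖rem S (fun t => ∫ z, f z (S t) ∂ν)
            (fun t => ∫ z, clmToMat (fderiv ℝ (f z) (S t)) ∂ν) s t‖ ^ (p / 2)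
          ≤ (C * (‖S t - S s‖ * ‖S t - S s‖)) ^ (p / 2) :=
            Real.rpow_le_rpow (norm_nonneg _) hb (by positivity)
        _ = C ^ (p / 2) * ((‖S t - S s‖ * ‖S t - S s‖)) ^ (p / 2) :=
            Real.mul_rpow hC0 (by positivity)
        _ = C ^ (p / 2) * ‖S t - S s‖ ^ p := by
            rw [show ‖S t - S s‖ * ‖S t - S s‖ = ‖S t - S s‖ ^ ((2:ℕ):ℝ) by
              rw [Real.rpow_natCast]; ring]
            rw [← Real.rpow_mul (norm_nonneg _),
              show ((2:ℕ):ℝ) * (p / 2) = p by push_cast; ring]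
        _ ≤ C ^ (p / 2) * w s t := mul_le_mul_of_nonneg_left (hRIE.domS hs hst htT)
            (Real.rpow_nonneg hC0 _)
  · -- jumps
    intro t ht hjump
    by_contra hnot
    obtain ⟨w, hRIE⟩ := hS (t + 1) (by linarith)
    obtain ⟨l, hl⟩ := hRIE.cadlag.2 t ⟨ht, by linarith⟩
    have hlS : l = S t := by
      by_contra hne
      set ε : ℝ := ‖l - S t‖ with hεdef
      have hε : 0 < ε := by
        rw [hεdef, norm_pos_iff]
        exact sub_ne_zero.mpr hne
      -- left limit: δ-ball
      obtain ⟨δ, hδ0, hδ⟩ := (Metric.tendsto_nhdsWithin_nhds.mp hl) (ε / 3) (by positivity)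
      -- uniform convergence and mesh
      obtain ⟨M1, hM1⟩ := Filter.eventually_atTop.mp
        ((Metric.tendstoUniformlyOn_iff.mp hRIE.discUnif) (ε / 3) (by positivity))
      obtain ⟨M2, hM2⟩ := π.mesh (t + 1) (by linarith) δ hδ0
      set n : ℕ := max M1 M2 with hndef
      -- find the partition interval containing t
      classical
      obtain ⟨k, hkle, hm⟩ : ∃ k, π.t n k ≤ t ∧ t < π.t n (k + 1) := by
        have hex : ∃ k, t < π.t n k := ((π.locFin n).eventually_gt_atTop t).exists
        have h0 : Nat.find hex ≠ 0 := by
          intro h0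
          have hsp := Nat.find_spec hex
          rw [h0, π.first n] at hsp
          exact absurd hsp (not_lt.mpr ht.le)
        refine ⟨Nat.find hex - 1, ?_, ?_⟩
        · exact not_lt.mp (Nat.find_min hex (Nat.pred_lt h0))
        · rw [Nat.sub_add_cancel (Nat.one_le_iff_ne_zero.mpr h0)]
          exact Nat.find_spec hex
      have hkne : π.t n k ≠ t := fun h => hnot ⟨n, k, h⟩
      have hklt : π.t n k < t := lt_of_le_of_ne hkle hkne
      have hmono : StrictMono (π.t n) := strictMono_nat_of_lt_succ (π.mono n)
      -- mesh bound
      have hmesh : π.t n (k + 1) - π.t n k < δ :=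
        hM2 n (le_max_right _ _) k (by linarith)
      -- discretization value at t
      have hdisc : discInf (π.t n) S (t + 1) t = S (π.t n k) := by
        have hzero : ∀ j, j ≠ k →
            Set.indicator (Ico (π.t n j) (min (π.t n (j+1)) (t+1))) (fun _ => S (π.t n j)) t
              = 0 := by
          intro j hj
          apply Set.indicator_of_notMem
          rintro ⟨h1, h2⟩
          rcases lt_or_gt_of_ne hj with hjk | hjk
          · have h3 : π.t n (j + 1) ≤ π.t n k := hmono.monotone (Nat.succ_le_of_lt hjk)
            have h4 := lt_min_iff.mp h2
            linarith [h4.1]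
          · have h3 : π.t n (k + 1) ≤ π.t n j := hmono.monotone (Nat.succ_le_of_lt hjk)
            linarith
        unfold discInf
        rw [Set.indicator_of_notMem (by simp)]
        rw [tsum_eq_single k hzero]
        rw [Set.indicator_of_mem (show t ∈ Ico (π.t n k) (min (π.t n (k+1)) (t+1)) from ⟨hkle, lt_min hm (by linarith)⟩)]
        simp
      -- uniform bound at t
      have hu : dist (S t) (discInf (π.t n) S (t + 1) t) < ε / 3 :=
        hM1 n (le_max_left _ _) t ⟨ht.le, by linarith⟩
      rw [hdisc] at hu
      -- left-limit bound at `π.t n k`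
      have hv : dist (S (π.t n k)) l < ε / 3 := by
        apply hδ
        · exact hklt
        · rw [Real.dist_eq, abs_of_nonpos (by linarith)]
          linarith
      have htri : ε ≤ dist l (S (π.t n k)) + dist (S (π.t n k)) (S t) := by
        have h := dist_triangle l (S (π.t n k)) (S t)
        have h2 : dist l (S t) = ε := by rw [hεdef, dist_eq_norm]
        linarith
      rw [dist_comm] at hv
      rw [dist_comm] at hu
      linarith
    -- conclude: φ is left-continuous at t, contradiction
    subst hlS
    have : Tendsto (fun u => ∫ z, f z (S u) ∂ν) (𝓝[<] t) (𝓝 (∫ z, f z (S t) ∂ν)) :=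
      (hgcont.tendsto _).comp hl
    exact hjump (leftLim_eq_of_tendsto this)
end
end

section
/- Let q₀ ∈ (2,3), let X : [0,T] → ℝ^d, and let w be a control function such that |X_{s,t}|^{q₀} ≤ w(s,t) for all (s,t) ∈ Δ_{[0,T]}. Then there exists a constant C depending only on q₀ such that for all points s = τ_0 < τ_1 < ⋯ < τ_N = t in [0,T]: |Σ_{i=0}^{N−1} X_{τ_i} ⊗ X_{τ_i,τ_{i+1}} − X_s ⊗ X_{s,t}| ≤ Σ_{j=2}^{N} (2 w(s,t)/(j−1))^{2/q₀} ≤ C N^{1−2/q₀} w(s,t)^{2/q₀}. If moreover n ∈ ℕ is such that |X_{τ_i,τ_{i+1}}| ≥ 2^{−n} for every 0 ≤ i ≤ N−1, then N ≤ 2^{n q₀} w(s,t), and consequently |Σ_{i=0}^{N−1} X_{τ_i} ⊗ X_{τ_i,τ_{i+1}} − X_s ⊗ X_{s,t}| ≤ C 2^{n(q₀−2)} w(s,t). -/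
open Set Filter MeasureTheory
open scoped Topology InnerProductSpace BigOperators

noncomputable section

namespace DiscreteSewingAux

lemma tensor_apply {d : ℕ} (a b : Vec d) (ij : Fin d × Fin d) : tensor a b ij = a ij.1 * b ij.2 := rfl

lemma tensor_zero_right {d : ℕ} (a : Vec d) : tensor a 0 = 0 := by
  ext ij
  show a ij.1 * (0 : Vec d) ij.2 = (0 : Mat d) ij
  simp

lemma chen_id {d : ℕ} (x y z : Vec d) :
    tensor x (y - x) + tensor y (z - y) - tensor x (z - x) = tensor (y - x) (z - y) := by
  ext ij
  show (tensor x (y-x)) ij + (tensor y (z-y)) ij - (tensor x (z-x)) ij = _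
  simp only [tensor_apply]
  show x ij.1 * (y ij.2 - x ij.2) + y ij.1 * (z ij.2 - y ij.2) - x ij.1 * (z ij.2 - x ij.2)
      = (y ij.1 - x ij.1) * (z ij.2 - y ij.2)
  ring

lemma norm_tensor {d : ℕ} (a b : Vec d) : ‖tensor a b‖ = ‖a‖ * ‖b‖ := by
  rw [EuclideanSpace.norm_eq, EuclideanSpace.norm_eq, EuclideanSpace.norm_eq,
    ← Real.sqrt_mul (by positivity)]
  congr 1
  rw [Finset.sum_mul_sum, Fintype.sum_prod_type]
  refine Finset.sum_congr rfl fun i _ => Finset.sum_congr rfl fun j _ => ?_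
  simp [tensor_apply, abs_mul, mul_pow, mul_comm, mul_assoc, mul_left_comm, sq_abs]

lemma mono_le (τ : ℕ → ℝ) (N : ℕ) (hτ : ∀ i < N, τ i < τ (i + 1)) :
    ∀ a b, a ≤ b → b ≤ N → τ a ≤ τ b := by
  intro a b hab hbN
  induction b with
  | zero => obtain rfl : a = 0 := Nat.le_zero.mp hab; exact le_rfl
  | succ m ih =>
    rcases eq_or_lt_of_le hab with rfl | h
    · exact le_rfl
    · exact (ih (by omega) (by omega)).trans (hτ m (by omega)).le

lemma ctrl_sum {T : ℝ} {w : ℝ → ℝ → ℝ} (hw : IsControl T w) :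
    ∀ (N : ℕ) (τ : ℕ → ℝ), 0 ≤ τ 0 → τ N ≤ T → (∀ i < N, τ i < τ (i + 1)) →
      ∑ k ∈ Finset.range N, w (τ k) (τ (k + 1)) ≤ w (τ 0) (τ N) := by
  intro N
  induction N with
  | zero => intro τ h0 hT _; simpa using hw.1 h0 le_rfl hT
  | succ m ih =>
    intro τ h0 hT hτ
    have hmono := mono_le τ (m + 1) hτ
    have h1 := ih τ h0 ((hmono m (m + 1) (by omega) le_rfl).trans hT) (fun i hi => hτ i (by omega))
    have h2 := hw.2 h0 (hmono 0 m (by omega) (by omega)) (hmono m (m + 1) (by omega) le_rfl) hT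
    rw [Finset.sum_range_succ]
    linarith

lemma partA {q₀ T : ℝ} {d : ℕ} {X : ℝ → Vec d} {w : ℝ → ℝ → ℝ}
    (hq : 2 < q₀) (hw : IsControl T w)
    (hX : ∀ ⦃s t : ℝ⦄, 0 ≤ s → s ≤ t → t ≤ T → ‖X t - X s‖ ^ q₀ ≤ w s t) :
    ∀ (N : ℕ) (τ : ℕ → ℝ), 0 ≤ τ 0 → τ N ≤ T → (∀ i < N, τ i < τ (i + 1)) →
      ‖(∑ i ∈ Finset.range N, tensor (X (τ i)) (X (τ (i + 1)) - X (τ i)))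
          - tensor (X (τ 0)) (X (τ N) - X (τ 0))‖
        ≤ ∑ j ∈ Finset.Icc 2 N, (2 * w (τ 0) (τ N) / ((j : ℝ) - 1)) ^ (2 / q₀) := by
  have hq0 : q₀ ≠ 0 := by linarith
  intro N
  induction N with
  | zero =>
    intro τ h0 hT hτ
    rw [Finset.Icc_eq_empty (by omega)]
    simp [sub_self, tensor_zero_right]
  | succ n ih =>
    intro τ h0 hT hτ
    rcases Nat.eq_zero_or_pos n with rfl | hn
    · rw [Finset.Icc_eq_empty (by omega)]
      simp [Finset.sum_range_one]
    -- main case : n ≥ 1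
    have hmono := mono_le τ (n + 1) hτ
    have hτ0 : ∀ k, k ≤ n + 1 → 0 ≤ τ k := fun k hk => h0.trans (hmono 0 k (Nat.zero_le _) hk)
    have hτT : ∀ k, k ≤ n + 1 → τ k ≤ T := fun k hk => (hmono k (n + 1) hk le_rfl).trans hT
    have hwnn : ∀ a b, a ≤ b → b ≤ n + 1 → 0 ≤ w (τ a) (τ b) := fun a b hab hb =>
      hw.1 (hτ0 a (hab.trans hb)) (hmono a b hab hb) (hτT b hb)
    have hWnn : 0 ≤ w (τ 0) (τ (n + 1)) := hwnn 0 (n + 1) (by omega) le_rfl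
    have hn0 : ((n : ℝ)) ≠ 0 := Nat.cast_ne_zero.mpr (by omega)
    -- choose the index to remove
    have hsum : ∑ i ∈ Finset.range n, (w (τ i) (τ (i + 1)) + w (τ (i + 1)) (τ (i + 2)))
        ≤ 2 * w (τ 0) (τ (n + 1)) := by
      rw [Finset.sum_add_distrib]
      have hA : ∑ i ∈ Finset.range n, w (τ i) (τ (i + 1)) ≤ w (τ 0) (τ (n + 1)) := by
        calc ∑ i ∈ Finset.range n, w (τ i) (τ (i + 1))
            ≤ ∑ i ∈ Finset.range (n + 1), w (τ i) (τ (i + 1)) :=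
              Finset.sum_le_sum_of_subset_of_nonneg (Finset.range_subset_range.mpr (by omega))
                (fun i hi _ => hwnn i (i + 1) (by omega)
                  (by have := Finset.mem_range.mp hi; omega))
          _ ≤ w (τ 0) (τ (n + 1)) := ctrl_sum hw (n + 1) τ h0 hT hτ
      have hB : ∑ i ∈ Finset.range n, w (τ (i + 1)) (τ (i + 2)) ≤ w (τ 0) (τ (n + 1)) := by
        have e : ∑ i ∈ Finset.Ico 1 (n + 1), w (τ i) (τ (i + 1))
            = ∑ i ∈ Finset.range n, w (τ (i + 1)) (τ (i + 2)) := by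
          rw [Finset.sum_Ico_eq_sum_range]
          simp only [Nat.add_sub_cancel]
          refine Finset.sum_congr rfl fun j _ => ?_
          have e2 : 1 + j + 1 = j + 2 := by omega
          have e1 : 1 + j = j + 1 := by omega
          rw [e2, e1]
        rw [← e]
        calc ∑ i ∈ Finset.Ico 1 (n + 1), w (τ i) (τ (i + 1))
            ≤ ∑ i ∈ Finset.Ico 0 (n + 1), w (τ i) (τ (i + 1)) :=
              Finset.sum_le_sum_of_subset_of_nonneg (Finset.Ico_subset_Ico (by omega) le_rfl)
                (fun i hi _ => hwnn i (i + 1) (by omega)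
                  (by have := (Finset.mem_Ico.mp hi).2; omega))
          _ ≤ w (τ 0) (τ (n + 1)) := by
              rw [← Finset.range_eq_Ico]
              exact ctrl_sum hw (n + 1) τ h0 hT hτ
      linarith
    obtain ⟨i, hi_mem, hi⟩ :=
      Finset.exists_le_of_sum_le (s := Finset.range n) ⟨0, Finset.mem_range.mpr hn⟩
        (f := fun i => w (τ i) (τ (i + 1)) + w (τ (i + 1)) (τ (i + 2)))
        (g := fun _ => 2 * w (τ 0) (τ (n + 1)) / n)
        (by rw [Finset.sum_const, Finset.card_range, nsmul_eq_mul, mul_div_cancel₀ _ hn0]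
            exact hsum)
    have hin : i < n := Finset.mem_range.mp hi_mem
    set σ : ℕ → ℝ := fun k => if k ≤ i then τ k else τ (k + 1) with hσ
    have hσ0 : σ 0 = τ 0 := by simp [hσ]
    have hσn : σ n = τ (n + 1) := by simp only [hσ]; rw [if_neg (by omega)]
    have hσmono : ∀ k < n, σ k < σ (k + 1) := by
      intro k hk
      simp only [hσ]
      split_ifs with h1 h2 h2
      · exact hτ k (by omega)
      · have hki : k = i := by omega
        subst hki
        exact (hτ k (by omega)).trans (hτ (k + 1) (by omega))
      · omega
      · exact hτ (k + 1) (by omega)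
    have ihσ := ih σ (by rw [hσ0]; exact h0) (by rw [hσn]; exact hT) hσmono
    rw [hσ0, hσn] at ihσ
    -- sum identity
    have key : (∑ k ∈ Finset.range (n + 1), tensor (X (τ k)) (X (τ (k + 1)) - X (τ k)))
        = (∑ k ∈ Finset.range n, tensor (X (σ k)) (X (σ (k + 1)) - X (σ k)))
          + tensor (X (τ (i + 1)) - X (τ i)) (X (τ (i + 2)) - X (τ (i + 1))) := by
      have e1 : ∀ k ∈ Finset.Ico 0 i,
          tensor (X (σ k)) (X (σ (k + 1)) - X (σ k))
            = tensor (X (τ k)) (X (τ (k + 1)) - X (τ k)) := by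
        intro k hk
        have hk' : k < i := (Finset.mem_Ico.mp hk).2
        simp only [hσ]
        rw [if_pos (by omega), if_pos (by omega)]
      have e2 : ∑ k ∈ Finset.Ico (i + 1) n, tensor (X (σ k)) (X (σ (k + 1)) - X (σ k))
          = ∑ k ∈ Finset.Ico (i + 2) (n + 1), tensor (X (τ k)) (X (τ (k + 1)) - X (τ k)) := by
        rw [Finset.sum_Ico_eq_sum_range, Finset.sum_Ico_eq_sum_range]
        have hnn : n - (i + 1) = n + 1 - (i + 2) := by omega
        rw [hnn]
        refine Finset.sum_congr rfl fun j _ => ?_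
        simp only [hσ]
        rw [if_neg (by omega), if_neg (by omega)]
        have e3 : i + 1 + j + 1 = i + 2 + j := by omega
        rw [e3]
      have hGi : tensor (X (σ i)) (X (σ (i + 1)) - X (σ i))
          = tensor (X (τ i)) (X (τ (i + 2)) - X (τ i)) := by
        simp only [hσ]
        rw [if_pos le_rfl, if_neg (by omega)]
      have hA : ∑ k ∈ Finset.range (n + 1), tensor (X (τ k)) (X (τ (k + 1)) - X (τ k))
          = ((∑ k ∈ Finset.Ico 0 i, tensor (X (τ k)) (X (τ (k + 1)) - X (τ k)))
              + tensor (X (τ i)) (X (τ (i + 1)) - X (τ i))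
              + tensor (X (τ (i + 1))) (X (τ (i + 2)) - X (τ (i + 1))))
            + ∑ k ∈ Finset.Ico (i + 2) (n + 1), tensor (X (τ k)) (X (τ (k + 1)) - X (τ k)) := by
        rw [Finset.range_eq_Ico,
          ← Finset.sum_Ico_consecutive _ (Nat.zero_le (i + 2)) (by omega : i + 2 ≤ n + 1),
          Finset.sum_Ico_succ_top (by omega : 0 ≤ i + 1),
          Finset.sum_Ico_succ_top (by omega : 0 ≤ i)]
      have hB : ∑ k ∈ Finset.range n, tensor (X (σ k)) (X (σ (k + 1)) - X (σ k))
          = ((∑ k ∈ Finset.Ico 0 i, tensor (X (σ k)) (X (σ (k + 1)) - X (σ k)))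
              + tensor (X (σ i)) (X (σ (i + 1)) - X (σ i)))
            + ∑ k ∈ Finset.Ico (i + 1) n, tensor (X (σ k)) (X (σ (k + 1)) - X (σ k)) := by
        rw [Finset.range_eq_Ico,
          ← Finset.sum_Ico_consecutive _ (Nat.zero_le (i + 1)) (by omega : i + 1 ≤ n),
          Finset.sum_Ico_succ_top (Nat.zero_le i)]
      rw [hA, hB, Finset.sum_congr rfl e1, e2, hGi,
        ← chen_id (X (τ i)) (X (τ (i + 1))) (X (τ (i + 2)))]
      abel
    -- estimate of the extra term
    have hΔ : ‖tensor (X (τ (i + 1)) - X (τ i)) (X (τ (i + 2)) - X (τ (i + 1)))‖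
        ≤ (2 * w (τ 0) (τ (n + 1)) / n) ^ (2 / q₀) := by
      rw [norm_tensor]
      have hw1 : 0 ≤ w (τ i) (τ (i + 1)) := hwnn i (i + 1) (by omega) (by omega)
      have hw2 : 0 ≤ w (τ (i + 1)) (τ (i + 2)) := hwnn (i + 1) (i + 2) (by omega) (by omega)
      have hq0' : 0 < q₀ := by linarith
      have hb1 : ‖X (τ (i + 1)) - X (τ i)‖ ≤ w (τ i) (τ (i + 1)) ^ (1 / q₀) := by
        have h := hX (hτ0 i (by omega)) (hmono i (i + 1) (by omega) (by omega))
          (hτT (i + 1) (by omega))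
        have h2 := Real.rpow_le_rpow (by positivity) h (by positivity : (0:ℝ) ≤ 1 / q₀)
        rwa [← Real.rpow_mul (norm_nonneg _), mul_one_div, div_self hq0, Real.rpow_one] at h2
      have hb2 : ‖X (τ (i + 2)) - X (τ (i + 1))‖ ≤ w (τ (i + 1)) (τ (i + 2)) ^ (1 / q₀) := by
        have h := hX (hτ0 (i + 1) (by omega)) (hmono (i + 1) (i + 2) (by omega) (by omega))
          (hτT (i + 2) (by omega))
        have h2 := Real.rpow_le_rpow (by positivity) h (by positivity : (0:ℝ) ≤ 1 / q₀)
        rwa [← Real.rpow_mul (norm_nonneg _), mul_one_div, div_self hq0, Real.rpow_one] at h2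
      calc ‖X (τ (i + 1)) - X (τ i)‖ * ‖X (τ (i + 2)) - X (τ (i + 1))‖
          ≤ w (τ i) (τ (i + 1)) ^ (1 / q₀) * w (τ (i + 1)) (τ (i + 2)) ^ (1 / q₀) :=
            mul_le_mul hb1 hb2 (norm_nonneg _) (by positivity)
        _ = (w (τ i) (τ (i + 1)) * w (τ (i + 1)) (τ (i + 2))) ^ (1 / q₀) :=
            (Real.mul_rpow hw1 hw2).symm
        _ ≤ ((w (τ i) (τ (i + 1)) + w (τ (i + 1)) (τ (i + 2))) ^ (2 : ℕ)) ^ (1 / q₀) :=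
            Real.rpow_le_rpow (by positivity) (by nlinarith) (by positivity)
        _ = (w (τ i) (τ (i + 1)) + w (τ (i + 1)) (τ (i + 2))) ^ (2 / q₀) := by
            rw [← Real.rpow_natCast_mul (by positivity)]
            congr 1
            push_cast
            ring
        _ ≤ (2 * w (τ 0) (τ (n + 1)) / n) ^ (2 / q₀) :=
            Real.rpow_le_rpow (by positivity) hi (by positivity)
    -- conclude
    calc ‖(∑ k ∈ Finset.range (n + 1), tensor (X (τ k)) (X (τ (k + 1)) - X (τ k)))
            - tensor (X (τ 0)) (X (τ (n + 1)) - X (τ 0))‖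
        = ‖((∑ k ∈ Finset.range n, tensor (X (σ k)) (X (σ (k + 1)) - X (σ k)))
              - tensor (X (τ 0)) (X (τ (n + 1)) - X (τ 0)))
            + tensor (X (τ (i + 1)) - X (τ i)) (X (τ (i + 2)) - X (τ (i + 1)))‖ := by
          rw [key, add_sub_right_comm]
      _ ≤ ‖(∑ k ∈ Finset.range n, tensor (X (σ k)) (X (σ (k + 1)) - X (σ k)))
              - tensor (X (τ 0)) (X (τ (n + 1)) - X (τ 0))‖
            + ‖tensor (X (τ (i + 1)) - X (τ i)) (X (τ (i + 2)) - X (τ (i + 1)))‖ :=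
          norm_add_le _ _
      _ ≤ (∑ j ∈ Finset.Icc 2 n, (2 * w (τ 0) (τ (n + 1)) / ((j : ℝ) - 1)) ^ (2 / q₀))
            + (2 * w (τ 0) (τ (n + 1)) / n) ^ (2 / q₀) := add_le_add ihσ hΔ
      _ = ∑ j ∈ Finset.Icc 2 (n + 1), (2 * w (τ 0) (τ (n + 1)) / ((j : ℝ) - 1)) ^ (2 / q₀) := by
          rw [Finset.sum_Icc_succ_top (by omega : 2 ≤ n + 1)]
          congr 2
          push_cast
          ring

lemma step_ineq {a : ℝ} (ha0 : 0 < a) (ha1 : a < 1) {m : ℝ} (hm : 1 ≤ m) :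
    m ^ (-a) ≤ 2 ^ a / (1 - a) * ((m + 1) ^ (1 - a) - m ^ (1 - a)) := by
  have hbpos : 0 < 1 - a := by linarith
  have hm0 : 0 < m := by linarith
  have hm1 : 0 < m + 1 := by linarith
  have hbern := rpow_one_add_le_one_add_mul_self (s := -(1 / (m + 1))) (p := 1 - a)
    (by rw [neg_le, neg_neg]; rw [div_le_one hm1]; linarith) hbpos.le (by linarith)
  have h1 : (1 : ℝ) + -(1 / (m + 1)) = m / (m + 1) := by field_simp; ring
  rw [h1] at hbern
  have h2 : m ^ (1 - a) = (m + 1) ^ (1 - a) * (m / (m + 1)) ^ (1 - a) := by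
    rw [← Real.mul_rpow hm1.le (by positivity)]
    congr 1
    field_simp
  have h3 : (m + 1) ^ (1 - a) * (m / (m + 1)) ^ (1 - a)
      ≤ (m + 1) ^ (1 - a) * (1 + (1 - a) * -(1 / (m + 1))) :=
    mul_le_mul_of_nonneg_left hbern (Real.rpow_nonneg hm1.le _)
  have h5 : (m + 1) ^ (1 - a) / (m + 1) = (m + 1) ^ (-a) := by
    rw [show (m + 1 : ℝ) ^ (1 - a) / (m + 1) = (m + 1) ^ (1 - a) / (m + 1) ^ (1 : ℝ) from by
        rw [Real.rpow_one],
      ← Real.rpow_sub hm1]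
    congr 1
    ring
  have hstep : m ^ (1 - a) ≤ (m + 1) ^ (1 - a) - (1 - a) * (m + 1) ^ (-a) := by
    have h4 : (m + 1) ^ (1 - a) * (1 + (1 - a) * -(1 / (m + 1)))
        = (m + 1) ^ (1 - a) - (1 - a) * ((m + 1) ^ (1 - a) / (m + 1)) := by ring
    rw [h2]
    calc (m + 1) ^ (1 - a) * (m / (m + 1)) ^ (1 - a)
        ≤ (m + 1) ^ (1 - a) * (1 + (1 - a) * -(1 / (m + 1))) := h3
      _ = (m + 1) ^ (1 - a) - (1 - a) * ((m + 1) ^ (1 - a) / (m + 1)) := h4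
      _ = (m + 1) ^ (1 - a) - (1 - a) * (m + 1) ^ (-a) := by rw [h5]
  have h6 : (2 : ℝ) ^ (-a) * m ^ (-a) ≤ (m + 1) ^ (-a) := by
    have hle : m + 1 ≤ 2 * m := by linarith
    calc (2 : ℝ) ^ (-a) * m ^ (-a) = (2 * m) ^ (-a) := (Real.mul_rpow (by norm_num) hm0.le).symm
      _ ≤ (m + 1) ^ (-a) := Real.rpow_le_rpow_of_nonpos hm1 hle (by linarith)
  have hD : (1 - a) * ((2 : ℝ) ^ (-a) * m ^ (-a)) ≤ (m + 1) ^ (1 - a) - m ^ (1 - a) := by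
    nlinarith [mul_le_mul_of_nonneg_left h6 hbpos.le]
  have hc : (0 : ℝ) < 2 ^ a := Real.rpow_pos_of_pos two_pos a
  have h7 := mul_le_mul_of_nonneg_left hD (le_of_lt (div_pos hc hbpos))
  calc m ^ (-a) = 2 ^ a / (1 - a) * ((1 - a) * ((2 : ℝ) ^ (-a) * m ^ (-a))) := by
        rw [Real.rpow_neg (by norm_num : (0:ℝ) ≤ 2)]
        field_simp
    _ ≤ _ := h7

lemma sum_bound {a : ℝ} (ha0 : 0 < a) (ha1 : a < 1) (N : ℕ) :
    ∑ j ∈ Finset.Icc 2 N, ((j : ℝ) - 1) ^ (-a) ≤ 2 / (1 - a) * (N : ℝ) ^ (1 - a) := by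
  have hb : 0 < 1 - a := by linarith
  rcases Nat.lt_or_ge N 2 with hN | hN
  · rw [Finset.Icc_eq_empty (by omega)]
    simp only [Finset.sum_empty]
    positivity
  · have key : ∀ j ∈ Finset.Icc 2 N, ((j : ℝ) - 1) ^ (-a)
        ≤ 2 ^ a / (1 - a) * (((j : ℝ)) ^ (1 - a) - ((j : ℝ) - 1) ^ (1 - a)) := by
      intro j hj
      have h2j : 2 ≤ j := (Finset.mem_Icc.mp hj).1
      have hm : (1 : ℝ) ≤ (j : ℝ) - 1 := by
        have : (2 : ℝ) ≤ (j : ℝ) := by exact_mod_cast h2j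
        linarith
      have h := step_ineq ha0 ha1 hm
      rwa [sub_add_cancel] at h
    calc ∑ j ∈ Finset.Icc 2 N, ((j : ℝ) - 1) ^ (-a)
        ≤ ∑ j ∈ Finset.Icc 2 N, 2 ^ a / (1 - a) * (((j : ℝ)) ^ (1 - a) - ((j : ℝ) - 1) ^ (1 - a)) :=
          Finset.sum_le_sum key
      _ = 2 ^ a / (1 - a)
            * ∑ j ∈ Finset.Icc 2 N, (((j : ℝ)) ^ (1 - a) - ((j : ℝ) - 1) ^ (1 - a)) := by
          rw [Finset.mul_sum]
      _ = 2 ^ a / (1 - a) * ((N : ℝ) ^ (1 - a) - 1) := by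
          congr 1
          rw [← Finset.Ico_add_one_right_eq_Icc, Finset.sum_Ico_eq_sum_range]
          have hN1 : N + 1 - 2 = N - 1 := by omega
          rw [hN1]
          have e : ∀ k ∈ Finset.range (N - 1),
              (((2 + k : ℕ) : ℝ)) ^ (1 - a) - (((2 + k : ℕ) : ℝ) - 1) ^ (1 - a)
                = (fun k : ℕ => ((k : ℝ) + 1) ^ (1 - a)) (k + 1)
                  - (fun k : ℕ => ((k : ℝ) + 1) ^ (1 - a)) k := by
            intro k _
            simp only
            congr 2 <;> push_cast <;> ring
          rw [Finset.sum_congr rfl e, Finset.sum_range_sub (fun k : ℕ => ((k : ℝ) + 1) ^ (1 - a))]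
          have hc : ((N - 1 : ℕ) : ℝ) + 1 = (N : ℝ) := by
            push_cast [Nat.cast_sub (by omega : 1 ≤ N)]
            ring
          rw [hc]
          norm_num
      _ ≤ 2 / (1 - a) * (N : ℝ) ^ (1 - a) := by
          have h2a : (2 : ℝ) ^ a ≤ 2 := by
            calc (2 : ℝ) ^ a ≤ 2 ^ (1 : ℝ) := Real.rpow_le_rpow_of_exponent_le one_le_two ha1.le
              _ = 2 := Real.rpow_one 2
          have hx : (N : ℝ) ^ (1 - a) - 1 ≤ (N : ℝ) ^ (1 - a) := by linarith
          have hdiv : (0 : ℝ) ≤ 2 ^ a / (1 - a) :=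
            div_nonneg (by positivity) hb.le
          calc 2 ^ a / (1 - a) * ((N : ℝ) ^ (1 - a) - 1)
              ≤ 2 ^ a / (1 - a) * (N : ℝ) ^ (1 - a) := mul_le_mul_of_nonneg_left hx hdiv
            _ ≤ 2 / (1 - a) * (N : ℝ) ^ (1 - a) :=
                mul_le_mul_of_nonneg_right (by gcongr)
                  (Real.rpow_nonneg (Nat.cast_nonneg N) _)

end DiscreteSewingAux

open DiscreteSewingAux

/-- **Discrete sewing bound for the left-point Riemann sums** (Step 2 of the proof of
Proposition 4.?).  If `|X_{s,t}|^{q₀} ≤ w(s,t)` for a control `w`, then for any points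
`s = τ_0 < τ_1 < ⋯ < τ_N = t` in `[0,T]`, the left-point Riemann sum satisfies
`|Σ_i X_{τ_i} ⊗ X_{τ_i,τ_{i+1}} − X_s ⊗ X_{s,t}| ≤ Σ_{j=2}^N (2w(s,t)/(j−1))^{2/q₀}
  ≤ C N^{1−2/q₀} w(s,t)^{2/q₀}`
with `C` depending only on `q₀`; and if all increments satisfy `|X_{τ_i,τ_{i+1}}| ≥ 2^{−n}`
then `N ≤ 2^{n q₀} w(s,t)` and the sum is bounded by `C 2^{n(q₀−2)} w(s,t)`. -/
theorem discrete_sewing_bound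
    (q₀ : ℝ) (hq₀ : 2 < q₀) (hq₀' : q₀ < 3) :
    ∃ C : ℝ, 0 < C ∧
      ∀ (d : ℕ) (T : ℝ), 0 < T →
      ∀ (X : ℝ → Vec d) (w : ℝ → ℝ → ℝ),
        IsControl T w →
        (∀ ⦃s t : ℝ⦄, 0 ≤ s → s ≤ t → t ≤ T → ‖X t - X s‖ ^ q₀ ≤ w s t) →
        ∀ (N : ℕ) (τ : ℕ → ℝ), 0 < N → 0 ≤ τ 0 → τ N ≤ T →
          (∀ i < N, τ i < τ (i + 1)) →
          (‖(∑ i ∈ Finset.range N, tensor (X (τ i)) (X (τ (i + 1)) - X (τ i)))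
              - tensor (X (τ 0)) (X (τ N) - X (τ 0))‖
            ≤ ∑ j ∈ Finset.Icc 2 N, (2 * w (τ 0) (τ N) / ((j : ℝ) - 1)) ^ (2 / q₀)) ∧
          ((∑ j ∈ Finset.Icc 2 N, (2 * w (τ 0) (τ N) / ((j : ℝ) - 1)) ^ (2 / q₀))
            ≤ C * (N : ℝ) ^ (1 - 2 / q₀) * w (τ 0) (τ N) ^ (2 / q₀)) ∧
          ∀ n : ℕ, (∀ i < N, (2 : ℝ) ^ (-(n : ℝ)) ≤ ‖X (τ (i + 1)) - X (τ i)‖) →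
            ((N : ℝ) ≤ 2 ^ ((n : ℝ) * q₀) * w (τ 0) (τ N) ∧
              ‖(∑ i ∈ Finset.range N, tensor (X (τ i)) (X (τ (i + 1)) - X (τ i)))
                  - tensor (X (τ 0)) (X (τ N) - X (τ 0))‖
                ≤ C * 2 ^ ((n : ℝ) * (q₀ - 2)) * w (τ 0) (τ N)) := by
  have hq0 : (0 : ℝ) < q₀ := by linarith
  have ha0 : (0 : ℝ) < 2 / q₀ := by positivity
  have ha1 : 2 / q₀ < 1 := (div_lt_one hq0).mpr (by linarith)
  have hb : (0 : ℝ) < 1 - 2 / q₀ := by linarith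
  refine ⟨2 ^ ((1 : ℝ) + 2 / q₀) / (1 - 2 / q₀),
    div_pos (Real.rpow_pos_of_pos two_pos _) hb, ?_⟩
  intro d T hT X w hw hX N τ hN h0 hTN hτ
  have hmono := mono_le τ N hτ
  have hτ0N : τ 0 ≤ τ N := hmono 0 N (Nat.zero_le N) le_rfl
  have hWnn : 0 ≤ w (τ 0) (τ N) := hw.1 h0 hτ0N hTN
  have partA' := partA hq₀ hw hX N τ h0 hTN hτ
  have partB : (∑ j ∈ Finset.Icc 2 N, (2 * w (τ 0) (τ N) / ((j : ℝ) - 1)) ^ (2 / q₀))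
      ≤ 2 ^ ((1 : ℝ) + 2 / q₀) / (1 - 2 / q₀) * (N : ℝ) ^ (1 - 2 / q₀)
        * w (τ 0) (τ N) ^ (2 / q₀) := by
    have e : ∀ j ∈ Finset.Icc 2 N, (2 * w (τ 0) (τ N) / ((j : ℝ) - 1)) ^ (2 / q₀)
        = 2 ^ (2 / q₀) * w (τ 0) (τ N) ^ (2 / q₀) * ((j : ℝ) - 1) ^ (-(2 / q₀)) := by
      intro j hj
      have h2j : (2 : ℝ) ≤ (j : ℝ) := by exact_mod_cast (Finset.mem_Icc.mp hj).1
      have hj1 : (0 : ℝ) < (j : ℝ) - 1 := by linarith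
      rw [Real.div_rpow (by positivity) hj1.le,
        Real.mul_rpow (by norm_num : (0:ℝ) ≤ 2) hWnn, Real.rpow_neg hj1.le, div_eq_mul_inv]
    rw [Finset.sum_congr rfl e, ← Finset.mul_sum]
    have hsum := sum_bound ha0 ha1 N
    calc 2 ^ (2 / q₀) * w (τ 0) (τ N) ^ (2 / q₀)
          * ∑ j ∈ Finset.Icc 2 N, ((j : ℝ) - 1) ^ (-(2 / q₀))
        ≤ 2 ^ (2 / q₀) * w (τ 0) (τ N) ^ (2 / q₀)
            * (2 / (1 - 2 / q₀) * (N : ℝ) ^ (1 - 2 / q₀)) :=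
          mul_le_mul_of_nonneg_left hsum (by positivity)
      _ = 2 ^ ((1 : ℝ) + 2 / q₀) / (1 - 2 / q₀) * (N : ℝ) ^ (1 - 2 / q₀)
            * w (τ 0) (τ N) ^ (2 / q₀) := by
          rw [show (2 : ℝ) ^ ((1 : ℝ) + 2 / q₀) = 2 * 2 ^ (2 / q₀) from by
            rw [Real.rpow_add two_pos, Real.rpow_one]]
          field_simp
  refine ⟨partA', partB, ?_⟩
  intro n hn
  have hterm : ∀ i < N, (2 : ℝ) ^ (-((n : ℝ) * q₀)) ≤ w (τ i) (τ (i + 1)) := by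
    intro i hi
    have h1 := hn i hi
    have h2 := hX (h0.trans (hmono 0 i (Nat.zero_le _) (by omega)))
      (hmono i (i + 1) (by omega) (by omega)) ((hmono (i + 1) N (by omega) le_rfl).trans hTN)
    have h3 : ((2 : ℝ) ^ (-(n : ℝ))) ^ q₀ ≤ ‖X (τ (i + 1)) - X (τ i)‖ ^ q₀ :=
      Real.rpow_le_rpow (by positivity) h1 (by linarith)
    have h4 : ((2 : ℝ) ^ (-(n : ℝ))) ^ q₀ = 2 ^ (-((n : ℝ) * q₀)) := by
      rw [← Real.rpow_mul (by norm_num : (0:ℝ) ≤ 2), neg_mul]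
    rw [← h4]
    exact h3.trans h2
  have hE : (0 : ℝ) < 2 ^ (-((n : ℝ) * q₀)) := Real.rpow_pos_of_pos two_pos _
  have hNsum : (N : ℝ) * 2 ^ (-((n : ℝ) * q₀)) ≤ w (τ 0) (τ N) := by
    have h := Finset.sum_le_sum (f := fun _ : ℕ => (2 : ℝ) ^ (-((n : ℝ) * q₀)))
      (g := fun i => w (τ i) (τ (i + 1)))
      (fun i hi => hterm i (Finset.mem_range.mp hi))
    rw [Finset.sum_const, Finset.card_range, nsmul_eq_mul] at h
    exact h.trans (ctrl_sum hw N τ h0 hTN hτ)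
  have hNle : (N : ℝ) ≤ 2 ^ ((n : ℝ) * q₀) * w (τ 0) (τ N) := by
    have h2 : (2 : ℝ) ^ (-((n : ℝ) * q₀)) * 2 ^ ((n : ℝ) * q₀) = 1 := by
      rw [← Real.rpow_add two_pos]
      simp
    calc (N : ℝ) = (N : ℝ) * (2 ^ (-((n : ℝ) * q₀)) * 2 ^ ((n : ℝ) * q₀)) := by
          rw [h2, mul_one]
      _ = ((N : ℝ) * 2 ^ (-((n : ℝ) * q₀))) * 2 ^ ((n : ℝ) * q₀) := by ring
      _ ≤ w (τ 0) (τ N) * 2 ^ ((n : ℝ) * q₀) :=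
          mul_le_mul_of_nonneg_right hNsum (Real.rpow_pos_of_pos two_pos _).le
      _ = 2 ^ ((n : ℝ) * q₀) * w (τ 0) (τ N) := mul_comm _ _
  refine ⟨hNle, ?_⟩
  have hWpos : 0 < w (τ 0) (τ N) := by
    have hN1 : (1 : ℝ) ≤ (N : ℝ) := by exact_mod_cast hN
    nlinarith
  have hNb : (N : ℝ) ^ (1 - 2 / q₀) ≤ (2 ^ ((n : ℝ) * q₀) * w (τ 0) (τ N)) ^ (1 - 2 / q₀) :=
    Real.rpow_le_rpow (Nat.cast_nonneg N) hNle hb.le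
  have hsplit : ((2 : ℝ) ^ ((n : ℝ) * q₀) * w (τ 0) (τ N)) ^ (1 - 2 / q₀)
      = 2 ^ ((n : ℝ) * (q₀ - 2)) * w (τ 0) (τ N) ^ (1 - 2 / q₀) := by
    rw [Real.mul_rpow (Real.rpow_pos_of_pos two_pos _).le hWpos.le,
      ← Real.rpow_mul (by norm_num : (0:ℝ) ≤ 2)]
    have he : (n : ℝ) * q₀ * (1 - 2 / q₀) = (n : ℝ) * (q₀ - 2) := by
      field_simp
    rw [he]
  have hWW : w (τ 0) (τ N) ^ (1 - 2 / q₀) * w (τ 0) (τ N) ^ (2 / q₀) = w (τ 0) (τ N) := by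
    rw [← Real.rpow_add hWpos]
    rw [show (1 - 2 / q₀) + 2 / q₀ = 1 from by ring, Real.rpow_one]
  have hCpos : (0 : ℝ) < 2 ^ ((1 : ℝ) + 2 / q₀) / (1 - 2 / q₀) :=
    div_pos (Real.rpow_pos_of_pos two_pos _) hb
  calc ‖(∑ i ∈ Finset.range N, tensor (X (τ i)) (X (τ (i + 1)) - X (τ i)))
          - tensor (X (τ 0)) (X (τ N) - X (τ 0))‖
      ≤ 2 ^ ((1 : ℝ) + 2 / q₀) / (1 - 2 / q₀) * (N : ℝ) ^ (1 - 2 / q₀)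
          * w (τ 0) (τ N) ^ (2 / q₀) := partA'.trans partB
    _ ≤ 2 ^ ((1 : ℝ) + 2 / q₀) / (1 - 2 / q₀)
          * (2 ^ ((n : ℝ) * q₀) * w (τ 0) (τ N)) ^ (1 - 2 / q₀)
          * w (τ 0) (τ N) ^ (2 / q₀) :=
        mul_le_mul_of_nonneg_right (mul_le_mul_of_nonneg_left hNb hCpos.le)
          (Real.rpow_nonneg hWnn _)
    _ = 2 ^ ((1 : ℝ) + 2 / q₀) / (1 - 2 / q₀) * 2 ^ ((n : ℝ) * (q₀ - 2)) * w (τ 0) (τ N) := by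
        rw [hsplit, show 2 ^ ((1 : ℝ) + 2 / q₀) / (1 - 2 / q₀)
              * (2 ^ ((n : ℝ) * (q₀ - 2)) * w (τ 0) (τ N) ^ (1 - 2 / q₀))
              * w (τ 0) (τ N) ^ (2 / q₀)
            = 2 ^ ((1 : ℝ) + 2 / q₀) / (1 - 2 / q₀) * 2 ^ ((n : ℝ) * (q₀ - 2))
              * (w (τ 0) (τ N) ^ (1 - 2 / q₀) * w (τ 0) (τ N) ^ (2 / q₀)) from by ring, hWW]
end
end
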